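/- Let fⱼ : [3, ∞) → ℝ be differentiable functions and ψⱼ : [3,∞) → ℝ nonnegative measurable, satisfying |fⱼ'(t)| ≤ (1/(t·log t))·√(fⱼ(t))·ψⱼ(t) with fⱼ ≥ 0, and suppose ∫₃^∞ ((log t)^{n−1}/t)·ψⱼ(t)² dt ≤ 4εⱼ² for some εⱼ ≥ 0, where n ≥ 1. Then for all 3 ≤ a ≤ b: √(fⱼ(b)) − √(fⱼ(a)) ≤ (2/√n)·(log a)^{−n/2}·(2εⱼ). (Gronwall-type estimate (3.7) from the proof of Theorem 3.3.) -/

import Mathlib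

open MeasureTheory Set

set_option maxHeartbeats 2000000 in
/-- Gronwall-type estimate (3.7) from the proof of Theorem 3.3 (iii). -/
theorem stmt_9 (n : ℕ) (hn : 1 ≤ n) (f f' ψ : ℝ → ℝ) (ε : ℝ) (hε : 0 ≤ ε)
    (hf0 : ∀ t, 3 ≤ t → 0 ≤ f t)
    (hψ0 : ∀ t, 3 ≤ t → 0 ≤ ψ t)
    (hderiv : ∀ t, 3 ≤ t → HasDerivAt f (f' t) t)
    (hbound : ∀ t, 3 ≤ t → |f' t| ≤ ψ t * Real.sqrt (f t) / (t * Real.log t))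
    (hint : MeasureTheory.IntegrableOn
      (fun t => (Real.log t) ^ (n - 1) / t * (ψ t) ^ 2) (Set.Ici 3))
    (hintle : (∫ t in Set.Ici (3 : ℝ), (Real.log t) ^ (n - 1) / t * (ψ t) ^ 2) ≤ 4 * ε ^ 2) :
    ∀ a b : ℝ, 3 ≤ a → a ≤ b →
      Real.sqrt (f b) - Real.sqrt (f a) ≤
          2 * ε * Real.sqrt (1 / (n * (Real.log a) ^ n) - 1 / (n * (Real.log b) ^ n)) ∧
        Real.sqrt (f b) - Real.sqrt (f a) ≤ 4 * ε / Real.sqrt (n * (Real.log a) ^ n) := by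
  obtain ⟨m, rfl⟩ : ∃ m, n = m + 1 := ⟨n - 1, (Nat.succ_pred_eq_of_pos hn).symm⟩
  simp only [Nat.add_sub_cancel] at hint hintle
  intro a b ha hab
  -- basic facts
  have hl3 : (1 : ℝ) < Real.log 3 := by
    rw [Real.lt_log_iff_exp_lt (by norm_num : (0:ℝ) < 3)]
    calc Real.exp 1 < 2.7182818286 := Real.exp_one_lt_d9
      _ < 3 := by norm_num
  have hLt : ∀ t : ℝ, 3 ≤ t → 1 < Real.log t := fun t ht =>
    hl3.trans_le (Real.log_le_log (by norm_num) ht)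
  have hb3 : (3 : ℝ) ≤ b := ha.trans hab
  have hLa : 1 < Real.log a := hLt a ha
  have hLb : 1 < Real.log b := hLt b hb3
  have hnR : (0 : ℝ) < (m + 1 : ℕ) := by positivity
  set J : ℝ := 1 / ((m+1 : ℕ) * (Real.log a) ^ (m+1)) - 1 / ((m+1 : ℕ) * (Real.log b) ^ (m+1)) with hJdef
  have hxpos : 0 < ((m+1 : ℕ) : ℝ) * (Real.log a) ^ (m+1) :=
    mul_pos hnR (pow_pos (by linarith) _)
  have hypos : 0 < ((m+1 : ℕ) : ℝ) * (Real.log b) ^ (m+1) :=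
    mul_pos hnR (pow_pos (by linarith) _)
  have key : Real.sqrt (f b) - Real.sqrt (f a) ≤ ε * Real.sqrt J := by
    rcases eq_or_lt_of_le hab with rfl | hlt
    · have : J = 0 := by simp [hJdef]
      simp [this]
    -- main case a < b
    have hJpos : 0 < J := by
      have h1 : ((m+1 : ℕ) : ℝ) * (Real.log a) ^ (m+1) < ((m+1 : ℕ) : ℝ) * (Real.log b) ^ (m+1) := by
        have hll := Real.log_lt_log (by linarith : (0:ℝ) < a) hlt
        exact mul_lt_mul_of_pos_left
          (pow_lt_pow_left₀ hll (by linarith) (by omega)) hnR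
      have := one_div_lt_one_div_of_lt hxpos h1
      simpa [hJdef] using sub_pos.mpr this
    have hsub : Set.Icc a b ⊆ Set.Ici (3 : ℝ) := fun t ht => le_trans ha ht.1
    set A : ℝ → ℝ := fun t => (Real.log t) ^ m / t * (ψ t) ^ 2 with hA
    set B : ℝ → ℝ := fun t => 1 / (t * Real.log t ^ (m + 2)) with hB
    set W : ℝ → ℝ := fun t => ψ t / (2 * t * Real.log t) with hW
    -- measurability of ψ
    have hψmeas : AEStronglyMeasurable ψ (volume.restrict (Set.Ici (3:ℝ))) := by
      have hcontq : ContinuousOn (fun t : ℝ => t / (Real.log t) ^ m) (Set.Ici (3:ℝ)) := by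
        apply ContinuousOn.div continuousOn_id
        · exact (Real.continuousOn_log.mono (fun t ht => by
            simp only [Set.mem_compl_iff, Set.mem_singleton_iff]
            have h3 : (3:ℝ) ≤ t := ht
            intro h; rw [h] at h3; norm_num at h3)).pow m
        · intro t ht
          have h3 : (3:ℝ) ≤ t := ht
          exact pow_ne_zero _ (by have := hLt t h3; linarith)
      have h1 : AEStronglyMeasurable (fun t => A t * (t / (Real.log t) ^ m))
          (volume.restrict (Set.Ici (3:ℝ))) :=
        hint.aestronglyMeasurable.mul (hcontq.aestronglyMeasurable measurableSet_Ici)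
      have h2 : AEStronglyMeasurable (fun t => Real.sqrt (A t * (t / (Real.log t) ^ m)))
          (volume.restrict (Set.Ici (3:ℝ))) :=
        Real.continuous_sqrt.comp_aestronglyMeasurable h1
      refine h2.congr ?_
      filter_upwards [ae_restrict_mem measurableSet_Ici] with t ht
      have ht3 : (3:ℝ) ≤ t := ht
      have hL := hLt t ht3
      have htpos : (0:ℝ) < t := by linarith
      have htne : t ≠ 0 := ne_of_gt htpos
      have hLne : Real.log t ≠ 0 := by intro h; rw [h] at hL; norm_num at hL
      have heq : A t * (t / (Real.log t) ^ m) = (ψ t) ^ 2 := by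
        rw [hA]
        field_simp
      rw [heq, Real.sqrt_sq (hψ0 t ht3)]
    have hψmeasIcc : AEStronglyMeasurable ψ (volume.restrict (Set.Icc a b)) :=
      hψmeas.mono_measure (Measure.restrict_mono hsub le_rfl)
    -- continuity and integrability of B
    have hlogcont : ContinuousOn Real.log (Set.Icc a b) :=
      Real.continuousOn_log.mono (fun t ht => by
        simp only [Set.mem_compl_iff, Set.mem_singleton_iff]
        have h3 : (3:ℝ) ≤ t := hsub ht
        intro h; rw [h] at h3; norm_num at h3)
    have hcontB : ContinuousOn B (Set.Icc a b) := by
      apply ContinuousOn.div continuousOn_const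
      · exact continuousOn_id.mul (hlogcont.pow _)
      · intro t ht
        have ht3 : (3:ℝ) ≤ t := hsub ht
        have hL := hLt t ht3
        have htpos : (0:ℝ) < t := by linarith
        exact ne_of_gt (mul_pos htpos (pow_pos (by linarith) _))
    have hintB : IntegrableOn B (Set.Icc a b) := hcontB.integrableOn_Icc
    have hintA : IntegrableOn A (Set.Icc a b) := hint.mono_set hsub
    -- pointwise AM-GM bound
    have hpt : ∀ c : ℝ, 0 < c → ∀ t ∈ Set.Icc a b, W t ≤ (c * A t + (1/c) * B t) / 4 := by
      intro c hc t ht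
      have ht3 : (3:ℝ) ≤ t := hsub ht
      have hL := hLt t ht3
      have htpos : (0:ℝ) < t := by linarith
      have hL0 : (0:ℝ) < Real.log t := by linarith
      have htne : t ≠ 0 := ne_of_gt htpos
      have hLne : Real.log t ≠ 0 := ne_of_gt hL0
      have hcne : c ≠ 0 := ne_of_gt hc
      have hψt := hψ0 t ht3
      set x : ℝ := Real.sqrt ((Real.log t) ^ m / t) * ψ t with hx
      set y : ℝ := Real.sqrt (1 / (t * Real.log t ^ (m + 2))) with hy
      have harg1 : 0 ≤ (Real.log t) ^ m / t := div_nonneg (pow_nonneg hL0.le _) htpos.le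
      have harg2 : 0 ≤ 1 / (t * Real.log t ^ (m + 2)) :=
        le_of_lt (div_pos one_pos (mul_pos htpos (pow_pos hL0 _)))
      have hx2 : x ^ 2 = A t := by
        rw [hx, hA, mul_pow, Real.sq_sqrt harg1]
      have hy2 : y ^ 2 = B t := by
        rw [hy, hB, Real.sq_sqrt harg2]
      have hxy : x * y = ψ t / (t * Real.log t) := by
        rw [hx, hy, mul_comm (Real.sqrt _) (ψ t), mul_assoc, ← Real.sqrt_mul harg1]
        have heq : (Real.log t) ^ m / t * (1 / (t * Real.log t ^ (m + 2)))
            = (1 / (t * Real.log t)) ^ 2 := by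
          field_simp
          ring
        rw [heq, Real.sqrt_sq (le_of_lt (div_pos one_pos (mul_pos htpos hL0))), mul_one_div]
      have h2xy : 2 * (x * y) ≤ c * x ^ 2 + (1/c) * y ^ 2 := by
        have hkey : (c * x ^ 2 + (1/c) * y ^ 2) - 2 * (x * y) = (c * x - y) ^ 2 / c := by
          field_simp
          ring
        nlinarith [sq_nonneg (c * x - y), div_nonneg (sq_nonneg (c * x - y)) hc.le]
      have hWxy : W t = (x * y) / 2 := by
        rw [hW, hxy]
        dsimp only
        rw [div_div]
        ring_nf
      rw [hx2, hy2] at h2xy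
      rw [hWxy]
      linarith
    -- integrability of W
    have hintW : IntegrableOn W (Set.Icc a b) := by
      have hWm : AEStronglyMeasurable W (volume.restrict (Set.Icc a b)) := by
        have hcinv : ContinuousOn (fun t : ℝ => (2 * t * Real.log t)⁻¹) (Set.Icc a b) := by
          refine ContinuousOn.inv₀ ((continuousOn_const.mul continuousOn_id).mul hlogcont) ?_
          intro t ht
          have ht3 : (3:ℝ) ≤ t := hsub ht
          have hL := hLt t ht3
          exact ne_of_gt (mul_pos (mul_pos two_pos (by linarith)) (by linarith))
        have := hψmeasIcc.mul (hcinv.aestronglyMeasurable measurableSet_Icc)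
        convert this using 1
        funext t
        simp [hW, div_eq_mul_inv]
      refine Integrable.mono (((hintA.add hintB).div_const 4)) hWm ?_
      filter_upwards [ae_restrict_mem measurableSet_Icc] with t ht
      have ht3 : (3:ℝ) ≤ t := hsub ht
      have hL := hLt t ht3
      have htpos : (0:ℝ) < t := by linarith
      have hL0 : (0:ℝ) < Real.log t := by linarith
      have hWnn : 0 ≤ W t := by
        rw [hW]
        exact div_nonneg (hψ0 t ht3) (le_of_lt (mul_pos (mul_pos two_pos htpos) hL0))
      have hAnn : 0 ≤ A t := by
        rw [hA]
        exact mul_nonneg (div_nonneg (pow_nonneg hL0.le _) htpos.le) (sq_nonneg _)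
      have hBnn : 0 ≤ B t :=
        le_of_lt (div_pos one_pos (mul_pos htpos (pow_pos hL0 _)))
      rw [Real.norm_eq_abs, Real.norm_eq_abs, abs_of_nonneg hWnn]
      simp only [Pi.add_apply]
      rw [abs_of_nonneg (div_nonneg (add_nonneg hAnn hBnn) (by norm_num))]
      have := hpt 1 one_pos t ht
      simp only [one_mul, one_div, inv_one] at this
      linarith
    -- FTC for B
    have hBint_ab : (∫ t in a..b, B t) = J := by
      have hFder : ∀ t ∈ Set.uIcc a b, HasDerivAt
          (fun t => -(((m+1 : ℕ) : ℝ) * Real.log t ^ (m+1))⁻¹) (B t) t := by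
        intro t ht
        rw [Set.uIcc_of_le hab] at ht
        have ht3 : (3:ℝ) ≤ t := hsub ht
        have hL := hLt t ht3
        have htpos : (0:ℝ) < t := by linarith
        have hL0 : (0:ℝ) < Real.log t := by linarith
        have h1 : HasDerivAt (fun t : ℝ => ((m+1 : ℕ) : ℝ) * Real.log t ^ (m+1))
            (((m+1 : ℕ) : ℝ) * (((m+1 : ℕ) : ℝ) * Real.log t ^ m * t⁻¹)) t := by
          have := ((Real.hasDerivAt_log (ne_of_gt htpos)).pow (m+1)).const_mul ((m+1 : ℕ) : ℝ)
          simpa using this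
        have hne : ((m+1 : ℕ) : ℝ) * Real.log t ^ (m+1) ≠ 0 :=
          ne_of_gt (mul_pos hnR (pow_pos hL0 _))
        have h2 := (h1.inv hne).neg
        refine h2.congr_deriv ?_
        rw [hB]
        have hLne : Real.log t ≠ 0 := ne_of_gt hL0
        have htne : t ≠ 0 := ne_of_gt htpos
        have hmne : ((m+1 : ℕ) : ℝ) ≠ 0 := ne_of_gt hnR
        field_simp
        ring
      have hBii : IntervalIntegrable B volume a b :=
        (intervalIntegrable_iff_integrableOn_Icc_of_le hab).mpr hintB
      have := intervalIntegral.integral_eq_sub_of_hasDerivAt hFder hBii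
      rw [this, hJdef]
      push_cast
      ring
    -- Gronwall step
    have hG : Real.sqrt (f b) - Real.sqrt (f a) ≤ ∫ t in a..b, W t := by
      apply le_of_forall_pos_le_add
      intro δ hδ
      set g' : ℝ → ℝ := fun t => f' t / (2 * Real.sqrt (f t + δ^2)) with hg'
      have hgd : ∀ t ∈ Set.uIcc a b,
          HasDerivAt (fun t => Real.sqrt (f t + δ^2)) (g' t) t := by
        intro t ht
        rw [Set.uIcc_of_le hab] at ht
        have ht3 : (3:ℝ) ≤ t := hsub ht
        have := hf0 t ht3
        exact ((hderiv t ht3).add_const _).sqrt (by positivity)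
      have hgb : ∀ t ∈ Set.Icc a b, |g' t| ≤ W t := by
        intro t ht
        have ht3 : (3:ℝ) ≤ t := hsub ht
        have hL := hLt t ht3
        have htpos : (0:ℝ) < t := by linarith
        have hL0 : (0:ℝ) < Real.log t := by linarith
        have hft := hf0 t ht3
        have hψt := hψ0 t ht3
        have hs : 0 < Real.sqrt (f t + δ^2) := Real.sqrt_pos.mpr (by positivity)
        have hrs : Real.sqrt (f t) ≤ Real.sqrt (f t + δ^2) :=
          Real.sqrt_le_sqrt (by nlinarith)
        have hrn : 0 ≤ Real.sqrt (f t) := Real.sqrt_nonneg _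
        rw [hg', hW]
        dsimp only
        rw [abs_div, abs_of_pos (by linarith : (0:ℝ) < 2 * Real.sqrt (f t + δ^2))]
        calc |f' t| / (2 * Real.sqrt (f t + δ^2))
            ≤ (ψ t * Real.sqrt (f t) / (t * Real.log t)) / (2 * Real.sqrt (f t + δ^2)) := by
              apply div_le_div_of_nonneg_right (hbound t ht3) (by linarith)
          _ ≤ ψ t / (2 * t * Real.log t) := by
              rw [div_div, div_le_div_iff₀
                (mul_pos (mul_pos htpos hL0) (by linarith))
                (mul_pos (mul_pos two_pos htpos) hL0)]
              nlinarith [mul_le_mul_of_nonneg_left hrs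
                (mul_nonneg (mul_nonneg (mul_nonneg two_pos.le htpos.le) hL0.le) hψt)]
      -- integrability of g'
      have hfc : ContinuousOn f (Set.Icc a b) := fun t ht =>
        ((hderiv t (hsub ht)).continuousAt).continuousWithinAt
      have hsqc : ContinuousOn (fun t => Real.sqrt (f t + δ^2)) (Set.Icc a b) :=
        Real.continuous_sqrt.comp_continuousOn (hfc.add continuousOn_const)
      have hf'ae : AEStronglyMeasurable f' (volume.restrict (Set.Icc a b)) := by
        refine ((measurable_deriv f).aestronglyMeasurable.restrict).congr ?_
        filter_upwards [ae_restrict_mem measurableSet_Icc] with t ht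
        exact (hderiv t (hsub ht)).deriv
      have hg'ae : AEStronglyMeasurable g' (volume.restrict (Set.Icc a b)) := by
        have hcinv : ContinuousOn (fun t : ℝ => (2 * Real.sqrt (f t + δ^2))⁻¹) (Set.Icc a b) := by
          refine ContinuousOn.inv₀ (continuousOn_const.mul hsqc) ?_
          intro t ht
          have ht3 : (3:ℝ) ≤ t := hsub ht
          have hft := hf0 t ht3
          have hs : 0 < Real.sqrt (f t + δ^2) := Real.sqrt_pos.mpr (by positivity)
          exact ne_of_gt (by linarith)
        have := hf'ae.mul (hcinv.aestronglyMeasurable measurableSet_Icc)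
        convert this using 1
        funext t
        simp [hg', div_eq_mul_inv]
      have hg'int : IntegrableOn g' (Set.Icc a b) := by
        refine Integrable.mono hintW hg'ae ?_
        filter_upwards [ae_restrict_mem measurableSet_Icc] with t ht
        have ht3 : (3:ℝ) ≤ t := hsub ht
        have hL := hLt t ht3
        have htpos : (0:ℝ) < t := by linarith
        have hL0 : (0:ℝ) < Real.log t := by linarith
        have hWnn : 0 ≤ W t := by
          rw [hW]
          exact div_nonneg (hψ0 t ht3) (le_of_lt (mul_pos (mul_pos two_pos htpos) hL0))
        rw [Real.norm_eq_abs, Real.norm_eq_abs, abs_of_nonneg hWnn]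
        exact hgb t ht
      have hg'ii : IntervalIntegrable g' volume a b :=
        (intervalIntegrable_iff_integrableOn_Icc_of_le hab).mpr hg'int
      have hWii : IntervalIntegrable W volume a b :=
        (intervalIntegrable_iff_integrableOn_Icc_of_le hab).mpr hintW
      have hftc := intervalIntegral.integral_eq_sub_of_hasDerivAt hgd hg'ii
      have hmono := intervalIntegral.integral_mono_on hab hg'ii hWii
        (fun t ht => (le_abs_self _).trans (hgb t ht))
      have h1 : Real.sqrt (f b) ≤ Real.sqrt (f b + δ^2) :=
        Real.sqrt_le_sqrt (by nlinarith)
      have h2 : Real.sqrt (f a + δ^2) ≤ Real.sqrt (f a) + δ := by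
        rw [show Real.sqrt (f a) + δ = Real.sqrt ((Real.sqrt (f a) + δ)^2) from
          (Real.sqrt_sq (by positivity)).symm]
        apply Real.sqrt_le_sqrt
        nlinarith [Real.sq_sqrt (hf0 a ha), Real.sqrt_nonneg (f a)]
      rw [hftc] at hmono
      linarith
    -- integral bound
    have hIb : ∀ c : ℝ, 0 < c →
        (∫ t in a..b, W t) ≤ (c * (4 * ε^2) + (1/c) * J) / 4 := by
      intro c hc
      have hintD : IntegrableOn (fun t => (c * A t + (1/c) * B t) / 4) (Set.Icc a b) :=
        ((hintA.const_mul c).add (hintB.const_mul (1/c))).div_const 4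
      have hWii : IntervalIntegrable W volume a b :=
        (intervalIntegrable_iff_integrableOn_Icc_of_le hab).mpr hintW
      have hDii : IntervalIntegrable (fun t => (c * A t + (1/c) * B t) / 4) volume a b :=
        (intervalIntegrable_iff_integrableOn_Icc_of_le hab).mpr hintD
      have hAii : IntervalIntegrable A volume a b :=
        (intervalIntegrable_iff_integrableOn_Icc_of_le hab).mpr hintA
      have hBii : IntervalIntegrable B volume a b :=
        (intervalIntegrable_iff_integrableOn_Icc_of_le hab).mpr hintB
      have h1 := intervalIntegral.integral_mono_on hab hWii hDii (hpt c hc)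
      have h2 : (∫ t in a..b, (c * A t + (1/c) * B t) / 4)
          = (c * (∫ t in a..b, A t) + (1/c) * (∫ t in a..b, B t)) / 4 := by
        rw [intervalIntegral.integral_div]
        rw [intervalIntegral.integral_add (hAii.const_mul c) (hBii.const_mul (1/c))]
        rw [intervalIntegral.integral_const_mul, intervalIntegral.integral_const_mul]
      have hA4 : (∫ t in a..b, A t) ≤ 4 * ε^2 := by
        rw [intervalIntegral.integral_of_le hab]
        refine le_trans (setIntegral_mono_set hint ?_ ?_) hintle
        · filter_upwards [ae_restrict_mem measurableSet_Ici] with t ht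
          have ht3 : (3:ℝ) ≤ t := ht
          have hL0 : (0:ℝ) ≤ Real.log t := Real.log_nonneg (by linarith)
          have htpos : (0:ℝ) < t := by linarith
          rw [hA]
          exact mul_nonneg (div_nonneg (pow_nonneg hL0 _) htpos.le) (sq_nonneg _)
        · refine HasSubset.Subset.eventuallyLE ?_
          intro t ht
          exact le_trans ha (le_of_lt ht.1)
      rw [h2, hBint_ab] at h1
      have h3 : c * (∫ t in a..b, A t) ≤ c * (4 * ε^2) :=
        mul_le_mul_of_nonneg_left hA4 hc.le
      linarith
    -- conclude
    by_cases hε0 : ε = 0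
    · subst hε0
      simp only [zero_mul]
      apply le_of_forall_pos_le_add
      intro η hη
      have hc : (0:ℝ) < J / (4 * η) := by positivity
      have h := hG.trans (hIb _ hc)
      have heq : (J / (4 * η) * (4 * (0:ℝ)^2) + (1 / (J / (4 * η))) * J) / 4 = η := by
        rw [one_div_div]
        field_simp
        ring
      rw [heq] at h
      linarith
    · have hεpos : 0 < ε := lt_of_le_of_ne hε (Ne.symm hε0)
      have hs : 0 < Real.sqrt J := Real.sqrt_pos.mpr hJpos
      have hsq : Real.sqrt J ^ 2 = J := Real.sq_sqrt hJpos.le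
      have hc : (0:ℝ) < Real.sqrt J / (2 * ε) := by positivity
      have h := hG.trans (hIb _ hc)
      have hgen : ∀ s e : ℝ, 0 < s → 0 < e →
          (s / (2 * e) * (4 * e^2) + (1 / (s / (2 * e))) * s ^ 2) / 4 = e * s := by
        intro s e hs' he'
        rw [one_div_div]
        field_simp
        ring
      have heq := hgen (Real.sqrt J) ε hs hεpos
      rw [hsq] at heq
      rw [heq] at h
      exact h
  constructor
  · refine key.trans ?_
    nlinarith [Real.sqrt_nonneg J, hε]
  · refine key.trans ?_
    have h1 : Real.sqrt J ≤ Real.sqrt (1 / (((m+1 : ℕ) : ℝ) * (Real.log a) ^ (m+1))) :=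
      Real.sqrt_le_sqrt (by
        rw [hJdef]
        have h0 : 0 ≤ 1 / (((m+1 : ℕ) : ℝ) * (Real.log b) ^ (m+1)) := le_of_lt (by positivity)
        linarith)
    have h2 : Real.sqrt (1 / (((m+1 : ℕ) : ℝ) * (Real.log a) ^ (m+1)))
        = 1 / Real.sqrt (((m+1 : ℕ) : ℝ) * (Real.log a) ^ (m+1)) := by
      rw [one_div, one_div, Real.sqrt_inv]
    have hspos : 0 < Real.sqrt (((m+1 : ℕ) : ℝ) * (Real.log a) ^ (m+1)) :=
      Real.sqrt_pos.mpr hxpos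
    calc ε * Real.sqrt J ≤ ε * (1 / Real.sqrt (((m+1 : ℕ) : ℝ) * (Real.log a) ^ (m+1))) := by
          rw [← h2]; exact mul_le_mul_of_nonneg_left h1 hε
      _ = ε / Real.sqrt (((m+1 : ℕ) : ℝ) * (Real.log a) ^ (m+1)) := by ring
      _ ≤ 4 * ε / Real.sqrt (((m+1 : ℕ) : ℝ) * (Real.log a) ^ (m+1)) := by
          apply div_le_div_of_nonneg_right (by linarith) hspos.le
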